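/- Potential form of the simplest weakly nonlinear two-component system: let Z be a C² function on an open subset of ℝ³ (coordinates x, y, t) with Z_t > 0 and Z_y < 0, and define u = log(Z_t), v = log(−Z_y). Then the pair (u, v) satisfies the system u_y = e^v·(v_x − u_x), v_t = e^u·(u_x − v_x) if and only if Z satisfies the single second-order quasilinear equation Z_{yt} = Z_y·Z_{xt} − Z_t·Z_{xy}. -/

import Mathlib

/-- Partial derivative in `x` (first coordinate of `ℝ³ = ℝ × ℝ × ℝ` with coordinates
`(x, y, t)`). -/
noncomputable def pX (F : ℝ × ℝ × ℝ → ℝ) (p : ℝ × ℝ × ℝ) : ℝ := fderiv ℝ F p (1, 0, 0)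
/-- Partial derivative in `y`. -/
noncomputable def pY (F : ℝ × ℝ × ℝ → ℝ) (p : ℝ × ℝ × ℝ) : ℝ := fderiv ℝ F p (0, 1, 0)
/-- Partial derivative in `t`. -/
noncomputable def pT (F : ℝ × ℝ × ℝ → ℝ) (p : ℝ × ℝ × ℝ) : ℝ := fderiv ℝ F p (0, 0, 1)

/-- potential form of the simplest weakly nonlinear two-component system:
for `Z` C² on an open `Ω ⊆ ℝ³` with `Z_t > 0`, `Z_y < 0`, setting `u = log Z_t`,
`v = log(−Z_y)`, the pair `(u,v)` satisfies `u_y = e^v (v_x − u_x)`,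
`v_t = e^u (u_x − v_x)` if and only if `Z_{yt} = Z_y Z_{xt} − Z_t Z_{xy}`. -/
theorem stmt_10 (Ω : Set (ℝ × ℝ × ℝ)) (hΩ : IsOpen Ω)
    (Z : ℝ × ℝ × ℝ → ℝ) (hZ : ContDiffOn ℝ 2 Z Ω)
    (hZt : ∀ p ∈ Ω, 0 < pT Z p) (hZy : ∀ p ∈ Ω, pY Z p < 0)
    (u v : ℝ × ℝ × ℝ → ℝ)
    (hu : ∀ p, u p = Real.log (pT Z p))
    (hv : ∀ p, v p = Real.log (-(pY Z p))) :
    ∀ p ∈ Ω,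
      (pY u p = Real.exp (v p) * (pX v p - pX u p) ∧
        pT v p = Real.exp (u p) * (pX u p - pX v p))
      ↔ pT (fun q => pY Z q) p =
          pY Z p * pT (fun q => pX Z q) p - pT Z p * pY (fun q => pX Z q) p := by
  intro p hp
  have hZ2 : ContDiffAt ℝ 2 Z p := hZ.contDiffAt (hΩ.mem_nhds hp)
  have hd : DifferentiableAt ℝ (fderiv ℝ Z) p :=
    (hZ2.fderiv_right (m := 1) (by norm_num)).differentiableAt one_ne_zero
  set D := fderiv ℝ (fderiv ℝ Z) p with hD
  have key : ∀ w : ℝ × ℝ × ℝ,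
      HasFDerivAt (fun q => fderiv ℝ Z q w) (D.flip w) p := by
    intro w
    have h := hd.hasFDerivAt.clm_apply (hasFDerivAt_const w p)
    simpa using h
  have hsymm : ∀ a b : ℝ × ℝ × ℝ, D a b = D b a := by
    intro a b
    exact (hZ2.isSymmSndFDerivAt (by simp)).eq a b
  have hT : 0 < pT Z p := hZt p hp
  have hY : pY Z p < 0 := hZy p hp
  set T := pT Z p
  set Y := pY Z p
  set A := D (0, 0, 1) (0, 1, 0)
  set B := D (0, 0, 1) (1, 0, 0)
  set C := D (0, 1, 0) (1, 0, 0)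
  -- derivative of u
  have hueq : u = fun q => Real.log (fderiv ℝ Z q (0, 0, 1)) := funext hu
  have hU : HasFDerivAt u (T⁻¹ • (D.flip (0, 0, 1))) p := by
    rw [hueq]
    exact (Real.hasDerivAt_log hT.ne').comp_hasFDerivAt p (key (0, 0, 1))
  -- derivative of v
  have hveq : v = fun q => Real.log (-(fderiv ℝ Z q (0, 1, 0))) := funext hv
  have hV : HasFDerivAt v ((-Y)⁻¹ • (-(D.flip (0, 1, 0)))) p := by
    rw [hveq]
    exact (Real.hasDerivAt_log (by exact (neg_pos.mpr hY).ne')).comp_hasFDerivAt p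
      (key (0, 1, 0)).neg
  -- individual first derivatives
  have e1 : pY u p = T⁻¹ * A := by
    rw [pY, hU.fderiv]
    simp only [ContinuousLinearMap.smul_apply, ContinuousLinearMap.flip_apply, smul_eq_mul,
      hsymm (0, 1, 0) (0, 0, 1)]
    rfl
  have e2 : pX u p = T⁻¹ * B := by
    rw [pX, hU.fderiv]
    simp only [ContinuousLinearMap.smul_apply, ContinuousLinearMap.flip_apply, smul_eq_mul,
      hsymm (1, 0, 0) (0, 0, 1)]
    rfl
  have e3 : pX v p = Y⁻¹ * C := by
    rw [pX, hV.fderiv]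
    simp only [ContinuousLinearMap.smul_apply, ContinuousLinearMap.neg_apply,
      ContinuousLinearMap.flip_apply, smul_eq_mul, hsymm (1, 0, 0) (0, 1, 0), inv_neg]
    ring
  have e4 : pT v p = Y⁻¹ * A := by
    rw [pT, hV.fderiv]
    simp only [ContinuousLinearMap.smul_apply, ContinuousLinearMap.neg_apply,
      ContinuousLinearMap.flip_apply, smul_eq_mul, inv_neg]
    ring
  -- second derivatives appearing in the target equation
  have rY : (fun q => pY Z q) = fun q => fderiv ℝ Z q (0, 1, 0) := rfl
  have rX : (fun q => pX Z q) = fun q => fderiv ℝ Z q (1, 0, 0) := rfl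
  have f1 : pT (fun q => pY Z q) p = A := by
    rw [pT, rY, (key (0, 1, 0)).fderiv]
    simp only [ContinuousLinearMap.flip_apply]
    rfl
  have f2 : pT (fun q => pX Z q) p = B := by
    rw [pT, rX, (key (1, 0, 0)).fderiv]
    simp only [ContinuousLinearMap.flip_apply]
    rfl
  have f3 : pY (fun q => pX Z q) p = C := by
    rw [pY, rX, (key (1, 0, 0)).fderiv]
    simp only [ContinuousLinearMap.flip_apply]
    rfl
  have g1 : Real.exp (u p) = T := by
    rw [hu p, Real.exp_log hT]
  have g2 : Real.exp (v p) = -Y := by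
    rw [hv p, Real.exp_log (by linarith)]
  rw [e1, e2, e3, e4, f1, f2, f3, g1, g2]
  have hT' : T ≠ 0 := hT.ne'
  have hY' : Y ≠ 0 := hY.ne
  constructor
  · rintro ⟨-, h2⟩
    have h2' : A * (T * Y) = (Y * B - T * C) * (T * Y) := by
      field_simp at h2
      linear_combination (T * Y) * h2
    exact mul_right_cancel₀ (mul_ne_zero hT' hY') h2'
  · intro h
    rw [h]
    constructor <;> (field_simp; try ring)
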